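/- Let n, V, H be positive integers, E ∈ [−1,1]^{H×n} with columns e⁽ⁱ⁾, B ∈ ℝ^{V×H} with rows b_v, with the feasible set nonempty (there exists X ∈ [−1,1]^{V×n} with (1/n)·E·x_v = b_v for all v). Let ℓ₊, ℓ₋ : [−1,1] → ℝ be continuous with ℓ₊ monotone nonincreasing and ℓ₋ monotone nondecreasing, set Γ = ℓ₋ − ℓ₊, and suppose σ : ℝ → [−1,1] satisfies Γ(σ(m)) = max(Γ(−1), min(m, Γ(1))) for all m ∈ ℝ. Define Ψ(m) = ℓ₊(σ(m)) + ℓ₋(σ(m)) + |m − Γ(σ(m))|. Then the infimum over reconstructions X̃ ∈ [−1,1]^{V×n} of the supremum over feasible X ∈ [−1,1]^{V×n} of (1/n)·Σ_{i=1}^n Σ_{v=1}^V [ ((1+x_v⁽ⁱ⁾)/2)·ℓ₊(x̃_v⁽ⁱ⁾) + ((1−x_v⁽ⁱ⁾)/2)·ℓ₋(x̃_v⁽ⁱ⁾) ] equals (1/2)·Σ_{v=1}^V inf_{w ∈ ℝ^H} [ −b_vᵀw + (1/n)·Σ_{i=1}^n Ψ(wᵀe⁽ⁱ⁾) ]; moreover,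 if w_v* attains the v-th infimum, the reconstructions x̃_v⁽ⁱ⁾ = σ(w_v*ᵀe⁽ⁱ⁾) attain the minimax value. -/

import Mathlib

/-- The generalized potential well built from partial losses `lp`, `lm` and the clipped
pseudoinverse `σ` of `Γ = lm - lp`:
`Ψ(m) = ℓ₊(σ(m)) + ℓ₋(σ(m)) + |m - Γ(σ(m))|`. -/
noncomputable def PsiGen (lp lm sig : ℝ → ℝ) (m : ℝ) : ℝ :=
  lp (sig m) + lm (sig m) + |m - (lm (sig m) - lp (sig m))|

/-- The general bitwise reconstruction loss
`ℓ(x, x̃) = Σ_v [((1+x_v)/2)·ℓ₊(x̃_v) + ((1-x_v)/2)·ℓ₋(x̃_v)]`. -/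
noncomputable def genLoss (lp lm : ℝ → ℝ) {V : ℕ} (x xt : Fin V → ℝ) : ℝ :=
  ∑ v, ((1 + x v) / 2 * lp (xt v) + (1 - x v) / 2 * lm (xt v))

lemma glm_mono_lp (lp lm : ℝ → ℝ)
    (hlp : AntitoneOn lp (Set.Icc (-1 : ℝ) 1)) (hlm : MonotoneOn lm (Set.Icc (-1 : ℝ) 1))
    {s t : ℝ} (hs : s ∈ Set.Icc (-1:ℝ) 1) (ht : t ∈ Set.Icc (-1:ℝ) 1)
    (h : lm t - lp t ≤ lm s - lp s) : lp s ≤ lp t := by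
  rcases le_total s t with hst | hst
  · have h1 := hlm hs ht hst
    linarith
  · exact hlp ht hs hst

lemma glm_mono_lm (lp lm : ℝ → ℝ)
    (hlp : AntitoneOn lp (Set.Icc (-1 : ℝ) 1)) (hlm : MonotoneOn lm (Set.Icc (-1 : ℝ) 1))
    {s t : ℝ} (hs : s ∈ Set.Icc (-1:ℝ) 1) (ht : t ∈ Set.Icc (-1:ℝ) 1)
    (h : lm s - lp s ≤ lm t - lp t) : lm s ≤ lm t := by
  rcases le_total s t with hst | hst
  · exact hlm hs ht hst
  · have h1 := hlp ht hs hst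
    linarith

lemma glm_psi_le (lp lm sig : ℝ → ℝ)
    (hlp : AntitoneOn lp (Set.Icc (-1 : ℝ) 1)) (hlm : MonotoneOn lm (Set.Icc (-1 : ℝ) 1))
    (hsig : ∀ m, sig m ∈ Set.Icc (-1 : ℝ) 1)
    (hsigG : ∀ m, lm (sig m) - lp (sig m) = max (lm (-1) - lp (-1)) (min m (lm 1 - lp 1)))
    (m t : ℝ) (ht : t ∈ Set.Icc (-1:ℝ) 1) :
    PsiGen lp lm sig m ≤ lp t + lm t + |m - (lm t - lp t)| := by
  have hm1 : (-1:ℝ) ∈ Set.Icc (-1:ℝ) 1 := by constructor <;> norm_num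
  have hp1 : (1:ℝ) ∈ Set.Icc (-1:ℝ) 1 := by constructor <;> norm_num
  have hs := hsig m
  have hG := hsigG m
  have hA : lm (-1) - lp (-1) ≤ lm t - lp t := by
    have h1 := hlm hm1 ht ht.1
    have h2 := hlp hm1 ht ht.1
    linarith
  have hB : lm t - lp t ≤ lm 1 - lp 1 := by
    have h1 := hlm ht hp1 ht.2
    have h2 := hlp ht hp1 ht.2
    linarith
  unfold PsiGen
  rcases le_total m (lm (-1) - lp (-1)) with hma | hma
  · -- Γ s = lm (-1) - lp (-1)
    have hGs : lm (sig m) - lp (sig m) = lm (-1) - lp (-1) := by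
      rw [hG, max_eq_left]
      exact le_trans (min_le_left _ _) hma
    have hlmst : lm (sig m) ≤ lm t := glm_mono_lm lp lm hlp hlm hs ht (by linarith)
    have e1 : |m - (lm (sig m) - lp (sig m))| = (lm (sig m) - lp (sig m)) - m := by
      rw [abs_of_nonpos (by linarith [hGs])]; ring
    have e2 : |m - (lm t - lp t)| = (lm t - lp t) - m := by
      rw [abs_of_nonpos (by linarith [hGs])]; ring
    rw [e1, e2]; linarith
  · rcases le_total m (lm 1 - lp 1) with hmb | hmb
    · -- Γ s = m
      have hGs : lm (sig m) - lp (sig m) = m := by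
        rw [hG, min_eq_left hmb, max_eq_right hma]
      have e1 : |m - (lm (sig m) - lp (sig m))| = 0 := by rw [hGs]; simp
      rw [e1]
      rcases le_total (lm t - lp t) m with hc | hc
      · have hlpst : lp (sig m) ≤ lp t := glm_mono_lp lp lm hlp hlm hs ht (by linarith)
        have e2 : |m - (lm t - lp t)| = m - (lm t - lp t) := abs_of_nonneg (by linarith)
        rw [e2]; linarith
      · have hlmst : lm (sig m) ≤ lm t := glm_mono_lm lp lm hlp hlm hs ht (by linarith)
        have e2 : |m - (lm t - lp t)| = (lm t - lp t) - m := by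
          rw [abs_of_nonpos (by linarith)]; ring
        rw [e2]; linarith
    · -- Γ s = lm 1 - lp 1
      have hGs : lm (sig m) - lp (sig m) = lm 1 - lp 1 := by
        rw [hG, min_eq_right hmb, max_eq_right (by linarith)]
      have hlpst : lp (sig m) ≤ lp t := glm_mono_lp lp lm hlp hlm hs ht (by linarith)
      have e1 : |m - (lm (sig m) - lp (sig m))| = m - (lm (sig m) - lp (sig m)) :=
        abs_of_nonneg (by linarith [hGs])
      have e2 : |m - (lm t - lp t)| = m - (lm t - lp t) := abs_of_nonneg (by linarith)
      rw [e1, e2]; linarith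

lemma glm_strong_dual (n H : ℕ) (hn : 0 < n)
    (E : Fin H → Fin n → ℝ) (b : Fin H → ℝ) (c : Fin n → ℝ)
    (hfeas : ∃ x0 : Fin n → ℝ, (∀ i, x0 i ∈ Set.Icc (-1:ℝ) 1) ∧
      ∀ h, (1 / (n:ℝ)) * ∑ i, E h i * x0 i = b h) :
    ∃ xs : Fin n → ℝ, (∀ i, xs i ∈ Set.Icc (-1:ℝ) 1) ∧
      (∀ h, (1 / (n:ℝ)) * ∑ i, E h i * xs i = b h) ∧
      ∀ ε > (0:ℝ), ∃ w : Fin H → ℝ,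
        -(∑ h, b h * w h) + (1 / (n:ℝ)) * ∑ i, |(∑ h, w h * E h i) - c i|
          ≤ -((1 / (n:ℝ)) * ∑ i, xs i * c i) + ε := by
  classical
  set cube : Set (Fin n → ℝ) := {x | ∀ i, x i ∈ Set.Icc (-1:ℝ) 1} with hcube
  have hcubeC : IsCompact cube := by
    have hh : cube = Set.pi Set.univ (fun _ : Fin n => Set.Icc (-1:ℝ) 1) := by
      ext x; simp [hcube, Set.mem_pi, Pi.le_def, forall_and]
    rw [hh]
    exact isCompact_univ_pi fun _ => isCompact_Icc
  have hcubeConv : Convex ℝ cube := by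
    intro x hx y hy a b' ha hb' hab
    intro i
    exact (convex_Icc (-1:ℝ) 1) (hx i) (hy i) ha hb' hab
  set P : Set (Fin n → ℝ) := {x ∈ cube | ∀ h, (1 / (n:ℝ)) * ∑ i, E h i * x i = b h} with hP
  have hPne : P.Nonempty := by
    obtain ⟨x0, hx0, hx0b⟩ := hfeas
    exact ⟨x0, hx0, hx0b⟩
  have hQclosed : IsClosed {x : Fin n → ℝ | ∀ h, (1 / (n:ℝ)) * ∑ i, E h i * x i = b h} := by
    have hh : {x : Fin n → ℝ | ∀ h, (1 / (n:ℝ)) * ∑ i, E h i * x i = b h}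
        = ⋂ h, {x | (1 / (n:ℝ)) * ∑ i, E h i * x i = b h} := by
      ext x; simp
    rw [hh]
    exact isClosed_iInter fun h => isClosed_eq (by fun_prop) continuous_const
  have hPc : IsCompact P := by
    have hh : P = cube ∩ {x : Fin n → ℝ | ∀ h, (1 / (n:ℝ)) * ∑ i, E h i * x i = b h} := rfl
    rw [hh]
    exact hcubeC.inter_right hQclosed
  set f : (Fin n → ℝ) → ℝ := fun x => -((1 / (n:ℝ)) * ∑ i, x i * c i) with hf
  have hfc : ContinuousOn f P := by fun_prop
  obtain ⟨xs, hxsP, hxsMax⟩ := hPc.exists_isMaxOn hPne hfc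
  refine ⟨xs, hxsP.1, hxsP.2, ?_⟩
  intro ε hε
  set T : (Fin n → ℝ) → (Fin H → ℝ) × ℝ :=
    fun x => (fun h => (1 / (n:ℝ)) * ∑ i, E h i * x i, f x) with hT
  have hTc : Continuous T := by fun_prop
  set A : Set ((Fin H → ℝ) × ℝ) := T '' cube with hA
  have hAc : IsCompact A := hcubeC.image hTc
  have hsum : ∀ (d : Fin n → ℝ) (a b' : ℝ) (x y : Fin n → ℝ),
      ∑ i, d i * (a * x i + b' * y i) = a * ∑ i, d i * x i + b' * ∑ i, d i * y i := by
    intro d a b' x y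
    rw [Finset.mul_sum, Finset.mul_sum, ← Finset.sum_add_distrib]
    refine Finset.sum_congr rfl fun i _ => ?_
    ring
  have hAconv : Convex ℝ A := by
    rintro - ⟨x, hx, rfl⟩ - ⟨y, hy, rfl⟩ a b' ha hb' hab
    refine ⟨a • x + b' • y, hcubeConv hx hy ha hb' hab, ?_⟩
    have h2 : ∀ (d : Fin n → ℝ), ∑ i, (a • x + b' • y) i * d i
        = a * ∑ i, x i * d i + b' * ∑ i, y i * d i := by
      intro d
      rw [Finset.mul_sum, Finset.mul_sum, ← Finset.sum_add_distrib]
      refine Finset.sum_congr rfl fun i _ => ?_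
      simp only [Pi.add_apply, Pi.smul_apply, smul_eq_mul]; ring
    have hfst : (T (a • x + b' • y)).1 = (a • T x + b' • T y).1 := by
      funext h
      simp only [hT, Prod.fst_add, Prod.smul_fst, Pi.add_apply, Pi.smul_apply, smul_eq_mul]
      rw [hsum (E h) a b' x y]; ring
    have hsnd : (T (a • x + b' • y)).2 = (a • T x + b' • T y).2 := by
      simp only [hT, hf, Prod.snd_add, Prod.smul_snd, smul_eq_mul]
      rw [h2 c]; ring
    exact Prod.ext hfst hsnd
  set z : (Fin H → ℝ) × ℝ := (b, f xs + ε) with hz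
  have hzA : z ∉ A := by
    rintro ⟨x, hx, hxz⟩
    have h1 : ∀ h, (1 / (n:ℝ)) * ∑ i, E h i * x i = b h := by
      intro h
      exact congrFun (congrArg Prod.fst hxz) h
    have h2 : f x = f xs + ε := congrArg Prod.snd hxz
    have h3 : f x ≤ f xs := hxsMax ⟨hx, h1⟩
    linarith
  obtain ⟨φ, u, hφA, hφz⟩ := geometric_hahn_banach_closed_point hAconv hAc.isClosed hzA
  set lam : ℝ := φ ((0 : Fin H → ℝ), 1) with hlam
  set wp : Fin H → ℝ := fun h => φ ((Pi.single h 1 : Fin H → ℝ), 0) with hwp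
  have hrep : ∀ (y : Fin H → ℝ) (r : ℝ), φ (y, r) = (∑ h, y h * wp h) + r * lam := by
    intro y r
    have hd : (y, r) = (∑ h, y h • ((Pi.single h 1 : Fin H → ℝ), (0:ℝ)))
        + r • ((0 : Fin H → ℝ), 1) := by
      ext k
      · simp only [Prod.fst_add, Prod.fst_sum, Prod.smul_fst, Prod.smul_mk]
        simp [Finset.sum_apply, Pi.single_apply, mul_ite]
      · simp [Prod.snd_sum]
    rw [hd, map_add, map_sum, map_smul, smul_eq_mul]
    congr 1
    refine Finset.sum_congr rfl fun h _ => ?_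
    rw [map_smul, smul_eq_mul]
  have hsep : ∀ x ∈ cube,
      (∑ h, ((1 / (n:ℝ)) * ∑ i, E h i * x i) * wp h) + f x * lam < u := by
    intro x hx
    have hh := hφA (T x) ⟨x, hx, rfl⟩
    rwa [hT, hrep] at hh
  have hzval : u < (∑ h, b h * wp h) + (f xs + ε) * lam := by
    have hh := hφz
    rwa [hz, hrep] at hh
  have hxsval := hsep xs hxsP.1
  have hlampos : 0 < lam := by
    have h1 : (∑ h, ((1 / (n:ℝ)) * ∑ i, E h i * xs i) * wp h) = ∑ h, b h * wp h := by
      refine Finset.sum_congr rfl fun h _ => ?_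
      rw [hxsP.2 h]
    rw [h1] at hxsval
    nlinarith [hxsval.trans hzval]
  set w : Fin H → ℝ := fun h => wp h / lam with hw
  have hwl : ∀ h, w h * lam = wp h := by
    intro h
    exact div_mul_cancel₀ (wp h) hlampos.ne'
  set xsign : Fin n → ℝ := fun i => if 0 ≤ (∑ h, w h * E h i) - c i then 1 else -1 with hxsign
  have hxsign_cube : xsign ∈ cube := by
    intro i
    rw [hxsign]
    dsimp only
    split_ifs <;> norm_num
  have hmain := (hsep xsign hxsign_cube).trans hzval
  refine ⟨w, ?_⟩
  have e1 : ∀ q : Fin H → ℝ, (∑ h, q h * w h) * lam = ∑ h, q h * wp h := by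
    intro q
    rw [Finset.sum_mul]
    refine Finset.sum_congr rfl fun h _ => ?_
    rw [mul_assoc, hwl h]
  -- divide hmain by lam
  have hmain' : (∑ h, ((1 / (n:ℝ)) * ∑ i, E h i * xsign i) * w h) + f xsign
      < (∑ h, b h * w h) + (f xs + ε) := by
    have h2 : ((∑ h, ((1 / (n:ℝ)) * ∑ i, E h i * xsign i) * w h) + f xsign) * lam
        < ((∑ h, b h * w h) + (f xs + ε)) * lam := by
      rw [add_mul, add_mul, e1, e1]
      linarith [hmain]
    exact lt_of_mul_lt_mul_right h2 hlampos.le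
  have hswap : ∑ h, ((1 / (n:ℝ)) * ∑ i, E h i * xsign i) * w h
      = (1 / (n:ℝ)) * ∑ i, xsign i * (∑ h, w h * E h i) := by
    simp only [Finset.mul_sum, Finset.sum_mul]
    rw [Finset.sum_comm]
    refine Finset.sum_congr rfl fun i _ => Finset.sum_congr rfl fun h _ => by ring
  have habs : ∀ i, xsign i * ((∑ h, w h * E h i) - c i) = |(∑ h, w h * E h i) - c i| := by
    intro i
    rw [hxsign]
    dsimp only
    by_cases hi : 0 ≤ (∑ h, w h * E h i) - c i
    · rw [if_pos hi, abs_of_nonneg hi]; ring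
    · rw [if_neg hi, abs_of_neg (not_le.mp hi)]; ring
  have hkey : (1 / (n:ℝ)) * ∑ i, |(∑ h, w h * E h i) - c i|
      = (∑ h, ((1 / (n:ℝ)) * ∑ i, E h i * xsign i) * w h) + f xsign := by
    rw [hswap]
    simp only [hf]
    have hh : ∑ i, |(∑ h, w h * E h i) - c i|
        = ∑ i, (xsign i * (∑ h, w h * E h i) - xsign i * c i) := by
      refine Finset.sum_congr rfl fun i _ => ?_
      rw [← habs i]; ring
    rw [hh, Finset.sum_sub_distrib]
    ring
  simp only [hf] at hmain'
  linarith [hmain', hkey]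


lemma glm_swap (n H : ℕ) (E : Fin H → Fin n → ℝ) (x : Fin n → ℝ) (w : Fin H → ℝ) :
    ∑ h, ((1 / (n:ℝ)) * ∑ i, E h i * x i) * w h
      = (1 / (n:ℝ)) * ∑ i, x i * (∑ h, w h * E h i) := by
  simp only [Finset.mul_sum, Finset.sum_mul]
  rw [Finset.sum_comm]
  exact Finset.sum_congr rfl fun i _ => Finset.sum_congr rfl fun h _ => by ring

lemma glm_weak (n H : ℕ) (E : Fin H → Fin n → ℝ) (b : Fin H → ℝ)
    (lp lm sig : ℝ → ℝ) (x : Fin n → ℝ) (hx : ∀ i, x i ∈ Set.Icc (-1:ℝ) 1)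
    (hb : ∀ h, (1 / (n:ℝ)) * ∑ i, E h i * x i = b h) (w : Fin H → ℝ) :
    (1 / (n:ℝ)) * ∑ i, ((1 + x i) / 2 * lp (sig (∑ h, w h * E h i))
        + (1 - x i) / 2 * lm (sig (∑ h, w h * E h i)))
      ≤ (1 / 2) * (-(∑ h, b h * w h)
        + (1 / (n:ℝ)) * ∑ i, PsiGen lp lm sig (∑ h, w h * E h i)) := by
  have hbw : ∑ h, b h * w h = (1 / (n:ℝ)) * ∑ i, x i * (∑ h, w h * E h i) := by
    rw [← glm_swap n H E x w]
    exact Finset.sum_congr rfl fun h _ => by rw [hb h]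
  have hper : ∀ i : Fin n,
      (1 + x i) / 2 * lp (sig (∑ h, w h * E h i)) + (1 - x i) / 2 * lm (sig (∑ h, w h * E h i))
        ≤ (1 / 2) * (-(x i * (∑ h, w h * E h i)) + PsiGen lp lm sig (∑ h, w h * E h i)) := by
    intro i
    set m : ℝ := ∑ h, w h * E h i with hm
    have habs : x i * (m - (lm (sig m) - lp (sig m))) ≤ |m - (lm (sig m) - lp (sig m))| := by
      calc x i * (m - (lm (sig m) - lp (sig m)))
          ≤ |x i * (m - (lm (sig m) - lp (sig m)))| := le_abs_self _
        _ = |x i| * |m - (lm (sig m) - lp (sig m))| := abs_mul _ _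
        _ ≤ 1 * |m - (lm (sig m) - lp (sig m))| := by
            have hx1 : |x i| ≤ 1 := abs_le.mpr ⟨(hx i).1, (hx i).2⟩
            exact mul_le_mul_of_nonneg_right hx1 (abs_nonneg _)
        _ = |m - (lm (sig m) - lp (sig m))| := one_mul _
    unfold PsiGen
    linarith
  calc (1 / (n:ℝ)) * ∑ i, ((1 + x i) / 2 * lp (sig (∑ h, w h * E h i))
        + (1 - x i) / 2 * lm (sig (∑ h, w h * E h i)))
      ≤ (1 / (n:ℝ)) * ∑ i, (1 / 2) * (-(x i * (∑ h, w h * E h i))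
          + PsiGen lp lm sig (∑ h, w h * E h i)) := by
        apply mul_le_mul_of_nonneg_left (Finset.sum_le_sum fun i _ => hper i)
        positivity
    _ = (1 / 2) * (-(∑ h, b h * w h)
        + (1 / (n:ℝ)) * ∑ i, PsiGen lp lm sig (∑ h, w h * E h i)) := by
        rw [hbw]
        have hstep : ∑ i, (1 / 2 : ℝ) * (-(x i * (∑ h, w h * E h i))
            + PsiGen lp lm sig (∑ h, w h * E h i))
            = (1 / 2) * (-(∑ i, x i * (∑ h, w h * E h i))
              + ∑ i, PsiGen lp lm sig (∑ h, w h * E h i)) := by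
          rw [← Finset.mul_sum, Finset.sum_add_distrib, Finset.sum_neg_distrib]
        rw [hstep]
        ring

lemma glm_row_lb (n H : ℕ) (hn : 0 < n)
    (E : Fin H → Fin n → ℝ) (b : Fin H → ℝ)
    (lp lm sig : ℝ → ℝ)
    (hlp : AntitoneOn lp (Set.Icc (-1 : ℝ) 1)) (hlm : MonotoneOn lm (Set.Icc (-1 : ℝ) 1))
    (hsig : ∀ m, sig m ∈ Set.Icc (-1 : ℝ) 1)
    (hsigG : ∀ m, lm (sig m) - lp (sig m) = max (lm (-1) - lp (-1)) (min m (lm 1 - lp 1)))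
    (xt : Fin n → ℝ) (hxt : ∀ i, xt i ∈ Set.Icc (-1:ℝ) 1)
    (hfeas : ∃ x0 : Fin n → ℝ, (∀ i, x0 i ∈ Set.Icc (-1:ℝ) 1) ∧
      ∀ h, (1 / (n:ℝ)) * ∑ i, E h i * x0 i = b h) :
    ∃ x : Fin n → ℝ, (∀ i, x i ∈ Set.Icc (-1:ℝ) 1) ∧
      (∀ h, (1 / (n:ℝ)) * ∑ i, E h i * x i = b h) ∧
      ∀ ε > (0:ℝ), ∃ w : Fin H → ℝ,
        -(∑ h, b h * w h) + (1 / (n:ℝ)) * ∑ i, PsiGen lp lm sig (∑ h, w h * E h i)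
          ≤ 2 * ((1 / (n:ℝ)) * ∑ i, ((1 + x i) / 2 * lp (xt i) + (1 - x i) / 2 * lm (xt i))) + ε := by
  obtain ⟨xs, hxs1, hxs2, hxs3⟩ :=
    glm_strong_dual n H hn E b (fun i => lm (xt i) - lp (xt i)) hfeas
  refine ⟨xs, hxs1, hxs2, ?_⟩
  intro ε hε
  obtain ⟨w, hw⟩ := hxs3 ε hε
  refine ⟨w, ?_⟩
  -- Ψ(m_i) ≤ (lp+lm)(xt i) + |m_i - Γ(xt i)|
  have hpsi : ∀ i : Fin n, PsiGen lp lm sig (∑ h, w h * E h i)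
      ≤ (lp (xt i) + lm (xt i)) + |(∑ h, w h * E h i) - (lm (xt i) - lp (xt i))| := by
    intro i
    have := glm_psi_le lp lm sig hlp hlm hsig hsigG (∑ h, w h * E h i) (xt i) (hxt i)
    linarith
  have hsum1 : (1 / (n:ℝ)) * ∑ i, PsiGen lp lm sig (∑ h, w h * E h i)
      ≤ (1 / (n:ℝ)) * ∑ i, ((lp (xt i) + lm (xt i))
        + |(∑ h, w h * E h i) - (lm (xt i) - lp (xt i))|) := by
    apply mul_le_mul_of_nonneg_left (Finset.sum_le_sum fun i _ => hpsi i)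
    positivity
  -- identity: 2 * rl = Σ(lp+lm) - Σ x (lm - lp)
  have hid : 2 * ((1 / (n:ℝ)) * ∑ i, ((1 + xs i) / 2 * lp (xt i) + (1 - xs i) / 2 * lm (xt i)))
      = (1 / (n:ℝ)) * ∑ i, (lp (xt i) + lm (xt i))
        - (1 / (n:ℝ)) * ∑ i, xs i * (lm (xt i) - lp (xt i)) := by
    have h1 : ∑ i, ((1 + xs i) / 2 * lp (xt i) + (1 - xs i) / 2 * lm (xt i))
        = (1/2) * ∑ i, (lp (xt i) + lm (xt i))
          - (1/2) * ∑ i, xs i * (lm (xt i) - lp (xt i)) := by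
      rw [Finset.mul_sum, Finset.mul_sum, ← Finset.sum_sub_distrib]
      refine Finset.sum_congr rfl fun i _ => by ring
    rw [h1]; ring
  have hsplit : (1 / (n:ℝ)) * ∑ i, ((lp (xt i) + lm (xt i))
        + |(∑ h, w h * E h i) - (lm (xt i) - lp (xt i))|)
      = (1 / (n:ℝ)) * ∑ i, (lp (xt i) + lm (xt i))
        + (1 / (n:ℝ)) * ∑ i, |(∑ h, w h * E h i) - (lm (xt i) - lp (xt i))| := by
    rw [Finset.sum_add_distrib]; ring
  rw [hid]
  have hw' := hw
  -- hw : -(∑ b w) + (1/n) Σ |m_i - c_i| ≤ -((1/n) Σ xs c) + ε  with c i = lm (xt i) - lp (xt i)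
  linarith [hsum1, hw, hsplit.le, hsplit.ge]

/-- Minimax theorem for general reconstruction losses: the minimax value of the
autoencoding game equals `(1/2)·Σ_v inf_w [-b_vᵀw + (1/n)·Σᵢ Ψ(wᵀe⁽ⁱ⁾)]`, and if
`w_v*` attains each infimum then the reconstructions `x̃_v⁽ⁱ⁾ = σ(w_v*ᵀe⁽ⁱ⁾)` attain
the minimax value. -/
theorem general_loss_minimax
    (n V H : ℕ) (hn : 0 < n) (hV : 0 < V) (hH : 0 < H)
    (E : Fin H → Fin n → ℝ) (hE : ∀ h i, E h i ∈ Set.Icc (-1 : ℝ) 1)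
    (B : Fin V → Fin H → ℝ)
    (hfeas : ∃ X : Fin V → Fin n → ℝ,
      (∀ v i, X v i ∈ Set.Icc (-1 : ℝ) 1) ∧
      ∀ v h, (1 / (n : ℝ)) * ∑ i, E h i * X v i = B v h)
    (lp lm : ℝ → ℝ)
    (hlpc : ContinuousOn lp (Set.Icc (-1 : ℝ) 1))
    (hlmc : ContinuousOn lm (Set.Icc (-1 : ℝ) 1))
    (hlp : AntitoneOn lp (Set.Icc (-1 : ℝ) 1))
    (hlm : MonotoneOn lm (Set.Icc (-1 : ℝ) 1))
    (sig : ℝ → ℝ) (hsig : ∀ m, sig m ∈ Set.Icc (-1 : ℝ) 1)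
    (hsigG : ∀ m, lm (sig m) - lp (sig m) = max (lm (-1) - lp (-1)) (min m (lm 1 - lp 1))) :
    (⨅ Xt : {Xt : Fin V → Fin n → ℝ // ∀ v i, Xt v i ∈ Set.Icc (-1 : ℝ) 1},
      ⨆ X : {X : Fin V → Fin n → ℝ //
          (∀ v i, X v i ∈ Set.Icc (-1 : ℝ) 1) ∧
          ∀ v h, (1 / (n : ℝ)) * ∑ i, E h i * X v i = B v h},
        (1 / (n : ℝ)) * ∑ i, genLoss lp lm (fun v => X.1 v i) (fun v => Xt.1 v i))
      = (1 / 2) * ∑ v, ⨅ w : Fin H → ℝ,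
          (-(∑ h, B v h * w h) + (1 / (n : ℝ)) * ∑ i, PsiGen lp lm sig (∑ h, w h * E h i))
    ∧
    ∀ wstar : Fin V → Fin H → ℝ,
      (∀ v, ∀ w : Fin H → ℝ,
        (-(∑ h, B v h * wstar v h)
            + (1 / (n : ℝ)) * ∑ i, PsiGen lp lm sig (∑ h, wstar v h * E h i))
          ≤ (-(∑ h, B v h * w h)
            + (1 / (n : ℝ)) * ∑ i, PsiGen lp lm sig (∑ h, w h * E h i))) →
      (⨆ X : {X : Fin V → Fin n → ℝ //
          (∀ v i, X v i ∈ Set.Icc (-1 : ℝ) 1) ∧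
          ∀ v h, (1 / (n : ℝ)) * ∑ i, E h i * X v i = B v h},
        (1 / (n : ℝ)) * ∑ i, genLoss lp lm (fun v => X.1 v i)
          (fun v => sig (∑ h, wstar v h * E h i)))
        = (1 / 2) * ∑ v, ⨅ w : Fin H → ℝ,
            (-(∑ h, B v h * w h)
              + (1 / (n : ℝ)) * ∑ i, PsiGen lp lm sig (∑ h, w h * E h i)) := by
  classical
  obtain ⟨X0, hX0c, hX0b⟩ := hfeas
  haveI hneX : Nonempty {X : Fin V → Fin n → ℝ //
      (∀ v i, X v i ∈ Set.Icc (-1 : ℝ) 1) ∧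
      ∀ v h, (1 / (n : ℝ)) * ∑ i, E h i * X v i = B v h} := ⟨⟨X0, hX0c, hX0b⟩⟩
  haveI hneXt : Nonempty {Xt : Fin V → Fin n → ℝ // ∀ v i, Xt v i ∈ Set.Icc (-1 : ℝ) 1} :=
    ⟨⟨fun _ _ => 0, fun v i => by constructor <;> norm_num⟩⟩
  have hn' : (0:ℝ) < (n:ℝ) := by exact_mod_cast hn
  have hV' : (0:ℝ) < (V:ℝ) := by exact_mod_cast hV
  -- uniform bound on lp, lm over [-1,1]
  obtain ⟨Cp, hCp⟩ := isCompact_Icc.exists_bound_of_continuousOn hlpc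
  obtain ⟨Cm, hCm⟩ := isCompact_Icc.exists_bound_of_continuousOn hlmc
  set C : ℝ := max Cp Cm with hC
  have hCp' : ∀ t ∈ Set.Icc (-1:ℝ) 1, |lp t| ≤ C := fun t ht =>
    le_trans (by simpa [Real.norm_eq_abs] using hCp t ht) (le_max_left _ _)
  have hCm' : ∀ t ∈ Set.Icc (-1:ℝ) 1, |lm t| ≤ C := fun t ht =>
    le_trans (by simpa [Real.norm_eq_abs] using hCm t ht) (le_max_right _ _)
  have h01 : (0:ℝ) ∈ Set.Icc (-1:ℝ) 1 := by constructor <;> norm_num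
  have hC0 : 0 ≤ C := le_trans (abs_nonneg _) (hCp' 0 h01)
  -- rearrangement of the game payoff
  have hFsum : ∀ X Xt : Fin V → Fin n → ℝ,
      (1 / (n : ℝ)) * ∑ i, genLoss lp lm (fun v => X v i) (fun v => Xt v i)
        = ∑ v, (1 / (n : ℝ)) * ∑ i,
            ((1 + X v i) / 2 * lp (Xt v i) + (1 - X v i) / 2 * lm (Xt v i)) := by
    intro X Xt
    unfold genLoss
    conv_rhs => rw [← Finset.mul_sum]
    rw [Finset.sum_comm]
  -- per-term bound
  have htermB : ∀ a t : ℝ, a ∈ Set.Icc (-1:ℝ) 1 → t ∈ Set.Icc (-1:ℝ) 1 →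
      -C ≤ (1 + a) / 2 * lp t + (1 - a) / 2 * lm t
        ∧ (1 + a) / 2 * lp t + (1 - a) / 2 * lm t ≤ C := by
    intro a t ha ht
    have h1 := abs_le.mp (hCp' t ht)
    have h2 := abs_le.mp (hCm' t ht)
    constructor
    · nlinarith [mul_nonneg (by linarith [ha.1] : (0:ℝ) ≤ 1 + a) (by linarith [h1.1] : 0 ≤ lp t + C),
        mul_nonneg (by linarith [ha.2] : (0:ℝ) ≤ 1 - a) (by linarith [h2.1] : 0 ≤ lm t + C)]
    · nlinarith [mul_nonneg (by linarith [ha.1] : (0:ℝ) ≤ 1 + a) (by linarith [h1.2] : 0 ≤ C - lp t),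
        mul_nonneg (by linarith [ha.2] : (0:ℝ) ≤ 1 - a) (by linarith [h2.2] : 0 ≤ C - lm t)]
  -- row loss bound
  have hrlB : ∀ x xt : Fin n → ℝ, (∀ i, x i ∈ Set.Icc (-1:ℝ) 1) →
      (∀ i, xt i ∈ Set.Icc (-1:ℝ) 1) →
      -C ≤ (1 / (n:ℝ)) * ∑ i, ((1 + x i) / 2 * lp (xt i) + (1 - x i) / 2 * lm (xt i))
        ∧ (1 / (n:ℝ)) * ∑ i, ((1 + x i) / 2 * lp (xt i) + (1 - x i) / 2 * lm (xt i)) ≤ C := by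
    intro x xt hx hxt
    have hub : ∑ i, ((1 + x i) / 2 * lp (xt i) + (1 - x i) / 2 * lm (xt i)) ≤ (n:ℝ) * C := by
      calc ∑ i, ((1 + x i) / 2 * lp (xt i) + (1 - x i) / 2 * lm (xt i)) ≤ ∑ _i : Fin n, C :=
            Finset.sum_le_sum fun i _ => (htermB _ _ (hx i) (hxt i)).2
        _ = (n:ℝ) * C := by
            rw [Finset.sum_const, Finset.card_univ, Fintype.card_fin, nsmul_eq_mul]
    have hlb : -((n:ℝ) * C) ≤ ∑ i, ((1 + x i) / 2 * lp (xt i) + (1 - x i) / 2 * lm (xt i)) := by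
      calc -((n:ℝ) * C) = ∑ _i : Fin n, (-C) := by
            rw [Finset.sum_const, Finset.card_univ, Fintype.card_fin, nsmul_eq_mul]; ring
        _ ≤ ∑ i, ((1 + x i) / 2 * lp (xt i) + (1 - x i) / 2 * lm (xt i)) :=
            Finset.sum_le_sum fun i _ => (htermB _ _ (hx i) (hxt i)).1
    constructor
    · calc -C = (1/(n:ℝ)) * (-((n:ℝ) * C)) := by field_simp
        _ ≤ (1/(n:ℝ)) * ∑ i, ((1 + x i) / 2 * lp (xt i) + (1 - x i) / 2 * lm (xt i)) :=
            mul_le_mul_of_nonneg_left hlb (by positivity)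
    · calc (1/(n:ℝ)) * ∑ i, ((1 + x i) / 2 * lp (xt i) + (1 - x i) / 2 * lm (xt i))
          ≤ (1/(n:ℝ)) * ((n:ℝ) * C) := mul_le_mul_of_nonneg_left hub (by positivity)
        _ = C := by field_simp
  -- F bounds summed over rows
  have hFB : ∀ X Xt : Fin V → Fin n → ℝ, (∀ v i, X v i ∈ Set.Icc (-1:ℝ) 1) →
      (∀ v i, Xt v i ∈ Set.Icc (-1:ℝ) 1) →
      -((V:ℝ) * C) ≤ ∑ v, (1 / (n:ℝ)) * ∑ i,
          ((1 + X v i) / 2 * lp (Xt v i) + (1 - X v i) / 2 * lm (Xt v i))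
        ∧ ∑ v, (1 / (n:ℝ)) * ∑ i,
          ((1 + X v i) / 2 * lp (Xt v i) + (1 - X v i) / 2 * lm (Xt v i)) ≤ (V:ℝ) * C := by
    intro X Xt hX hXt
    constructor
    · calc -((V:ℝ) * C) = ∑ _v : Fin V, (-C) := by
            rw [Finset.sum_const, Finset.card_univ, Fintype.card_fin, nsmul_eq_mul]; ring
        _ ≤ _ := Finset.sum_le_sum fun v _ => (hrlB (X v) (Xt v) (hX v) (hXt v)).1
    · calc ∑ v, (1 / (n:ℝ)) * ∑ i,
            ((1 + X v i) / 2 * lp (Xt v i) + (1 - X v i) / 2 * lm (Xt v i))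
          ≤ ∑ _v : Fin V, C := Finset.sum_le_sum fun v _ => (hrlB (X v) (Xt v) (hX v) (hXt v)).2
        _ = (V:ℝ) * C := by
            rw [Finset.sum_const, Finset.card_univ, Fintype.card_fin, nsmul_eq_mul]
  -- lower bound for the dual objective
  have hobjLB : ∀ (v : Fin V) (w : Fin H → ℝ),
      -(4*C) ≤ -(∑ h, B v h * w h)
        + (1 / (n : ℝ)) * ∑ i, PsiGen lp lm sig (∑ h, w h * E h i) := by
    intro v w
    have hswapB : ∑ h, B v h * w h = (1/(n:ℝ)) * ∑ i, X0 v i * (∑ h, w h * E h i) := by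
      rw [← glm_swap n H E (X0 v) w]
      exact Finset.sum_congr rfl fun h _ => by rw [hX0b v h]
    have h1 : ∑ h, B v h * w h ≤ (1/(n:ℝ)) * ∑ i, |∑ h, w h * E h i| := by
      rw [hswapB]
      refine mul_le_mul_of_nonneg_left (Finset.sum_le_sum fun i _ => ?_) (by positivity)
      calc X0 v i * (∑ h, w h * E h i) ≤ |X0 v i * (∑ h, w h * E h i)| := le_abs_self _
        _ = |X0 v i| * |∑ h, w h * E h i| := abs_mul _ _
        _ ≤ 1 * |∑ h, w h * E h i| :=
            mul_le_mul_of_nonneg_right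
              (abs_le.mpr ⟨(hX0c v i).1, (hX0c v i).2⟩) (abs_nonneg _)
        _ = |∑ h, w h * E h i| := one_mul _
    have h2 : ∀ m : ℝ, |m| - 4*C ≤ PsiGen lp lm sig m := by
      intro m
      have hs := hsig m
      have ha := abs_le.mp (hCp' _ hs)
      have hb' := abs_le.mp (hCm' _ hs)
      have h3 : |m| - |lm (sig m) - lp (sig m)| ≤ |m - (lm (sig m) - lp (sig m))| :=
        abs_sub_abs_le_abs_sub _ _
      have h4 : |lm (sig m) - lp (sig m)| ≤ |lm (sig m)| + |lp (sig m)| := abs_sub _ _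
      have h5 := hCp' _ hs
      have h6 := hCm' _ hs
      unfold PsiGen
      linarith
    have h7 : (1/(n:ℝ)) * ∑ i, (|∑ h, w h * E h i| - 4*C)
        ≤ (1/(n:ℝ)) * ∑ i, PsiGen lp lm sig (∑ h, w h * E h i) :=
      mul_le_mul_of_nonneg_left (Finset.sum_le_sum fun i _ => h2 _) (by positivity)
    have h8 : (1/(n:ℝ)) * ∑ i, (|∑ h, w h * E h i| - 4*C)
        = (1/(n:ℝ)) * ∑ i, |∑ h, w h * E h i| - 4*C := by
      rw [Finset.sum_sub_distrib, Finset.sum_const, Finset.card_univ, Fintype.card_fin,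
        nsmul_eq_mul, mul_sub]
      congr 1
      field_simp
    linarith
  set Dv : Fin V → ℝ := fun v => ⨅ w : Fin H → ℝ,
      (-(∑ h, B v h * w h) + (1 / (n : ℝ)) * ∑ i, PsiGen lp lm sig (∑ h, w h * E h i))
    with hDv
  have hDbdd : ∀ v : Fin V, BddBelow (Set.range fun w : Fin H → ℝ =>
      -(∑ h, B v h * w h) + (1 / (n : ℝ)) * ∑ i, PsiGen lp lm sig (∑ h, w h * E h i)) :=
    fun v => ⟨-(4*C), by rintro - ⟨w, rfl⟩; exact hobjLB v w⟩
  have hDle : ∀ (v : Fin V) (w : Fin H → ℝ),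
      Dv v ≤ -(∑ h, B v h * w h) + (1 / (n : ℝ)) * ∑ i, PsiGen lp lm sig (∑ h, w h * E h i) :=
    fun v w => ciInf_le (hDbdd v) w
  -- BddAbove for the sup over feasible X, for fixed reconstruction in the cube
  have hXbddA : ∀ Xt : Fin V → Fin n → ℝ, (∀ v i, Xt v i ∈ Set.Icc (-1:ℝ) 1) →
      BddAbove (Set.range fun X : {X : Fin V → Fin n → ℝ //
          (∀ v i, X v i ∈ Set.Icc (-1 : ℝ) 1) ∧
          ∀ v h, (1 / (n : ℝ)) * ∑ i, E h i * X v i = B v h} =>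
        (1 / (n : ℝ)) * ∑ i, genLoss lp lm (fun v => X.1 v i) (fun v => Xt v i)) := by
    intro Xt hXt
    refine ⟨(V:ℝ) * C, ?_⟩
    rintro - ⟨X, rfl⟩
    show (1 / (n : ℝ)) * ∑ i, genLoss lp lm (fun v => X.1 v i) (fun v => Xt v i) ≤ (V:ℝ) * C
    rw [hFsum X.1 Xt]
    exact (hFB X.1 Xt X.2.1 hXt).2
  -- lower bound for the sup over feasible X
  have hsupLB : ∀ Xt : Fin V → Fin n → ℝ, (∀ v i, Xt v i ∈ Set.Icc (-1:ℝ) 1) →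
      -((V:ℝ) * C) ≤ ⨆ X : {X : Fin V → Fin n → ℝ //
          (∀ v i, X v i ∈ Set.Icc (-1 : ℝ) 1) ∧
          ∀ v h, (1 / (n : ℝ)) * ∑ i, E h i * X v i = B v h},
        (1 / (n : ℝ)) * ∑ i, genLoss lp lm (fun v => X.1 v i) (fun v => Xt v i) := by
    intro Xt hXt
    refine le_ciSup_of_le (hXbddA Xt hXt) ⟨X0, hX0c, hX0b⟩ ?_
    show -((V:ℝ) * C) ≤ (1 / (n : ℝ)) * ∑ i, genLoss lp lm (fun v => X0 v i) (fun v => Xt v i)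
    rw [hFsum X0 Xt]
    exact (hFB X0 Xt hX0c hXt).1
  -- upper bound of the sup at a sigma-reconstruction
  have upper_at : ∀ wv : Fin V → Fin H → ℝ,
      (⨆ X : {X : Fin V → Fin n → ℝ //
          (∀ v i, X v i ∈ Set.Icc (-1 : ℝ) 1) ∧
          ∀ v h, (1 / (n : ℝ)) * ∑ i, E h i * X v i = B v h},
        (1 / (n : ℝ)) * ∑ i, genLoss lp lm (fun v => X.1 v i)
          (fun v => sig (∑ h, wv v h * E h i)))
        ≤ ∑ v, (1/2) * (-(∑ h, B v h * wv v h)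
            + (1 / (n : ℝ)) * ∑ i, PsiGen lp lm sig (∑ h, wv v h * E h i)) := by
    intro wv
    apply ciSup_le
    intro X
    have e := hFsum X.1 (fun v i => sig (∑ h, wv v h * E h i))
    rw [e]
    refine Finset.sum_le_sum fun v _ => ?_
    exact glm_weak n H E (B v) lp lm sig (X.1 v) (fun i => X.2.1 v i)
      (fun h => X.2.2 v h) (wv v)
  -- lower bound of the sup for arbitrary reconstruction in the cube
  have lower_at : ∀ Xt : Fin V → Fin n → ℝ, (∀ v i, Xt v i ∈ Set.Icc (-1:ℝ) 1) →
      (1/2) * ∑ v, Dv v ≤ ⨆ X : {X : Fin V → Fin n → ℝ //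
          (∀ v i, X v i ∈ Set.Icc (-1 : ℝ) 1) ∧
          ∀ v h, (1 / (n : ℝ)) * ∑ i, E h i * X v i = B v h},
        (1 / (n : ℝ)) * ∑ i, genLoss lp lm (fun v => X.1 v i) (fun v => Xt v i) := by
    intro Xt hXtc
    have hrow := fun v => glm_row_lb n H hn E (B v) lp lm sig hlp hlm hsig hsigG
      (fun i => Xt v i) (fun i => hXtc v i)
      ⟨X0 v, fun i => hX0c v i, fun h => hX0b v h⟩
    choose xst hx1 hx2 hx3 using hrow
    refine le_ciSup_of_le (hXbddA Xt hXtc)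
      ⟨xst, fun v i => hx1 v i, fun v h => hx2 v h⟩ ?_
    show (1/2) * ∑ v, Dv v
      ≤ (1 / (n : ℝ)) * ∑ i, genLoss lp lm (fun v => xst v i) (fun v => Xt v i)
    rw [hFsum xst Xt, Finset.mul_sum]
    refine Finset.sum_le_sum fun v _ => ?_
    have hDv2 : Dv v ≤ 2 * ((1 / (n:ℝ)) * ∑ i,
        ((1 + xst v i) / 2 * lp (Xt v i) + (1 - xst v i) / 2 * lm (Xt v i))) := by
      apply le_of_forall_pos_le_add
      intro ε hε
      obtain ⟨w, hw⟩ := hx3 v ε hε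
      exact (hDle v w).trans hw
    linarith
  constructor
  · apply le_antisymm
    · apply le_of_forall_pos_le_add
      intro ε hε
      have hwv : ∀ v : Fin V, ∃ w : Fin H → ℝ,
          -(∑ h, B v h * w h) + (1 / (n : ℝ)) * ∑ i, PsiGen lp lm sig (∑ h, w h * E h i)
            < Dv v + 2*ε/(V:ℝ) := by
        intro v
        apply exists_lt_of_ciInf_lt
        have hc : (0:ℝ) < 2*ε/(V:ℝ) := by positivity
        exact lt_add_of_pos_right (Dv v) hc
      choose wv hwvlt using hwv
      have hbb : BddBelow (Set.range fun Xt : {Xt : Fin V → Fin n → ℝ //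
          ∀ v i, Xt v i ∈ Set.Icc (-1 : ℝ) 1} =>
          ⨆ X : {X : Fin V → Fin n → ℝ //
              (∀ v i, X v i ∈ Set.Icc (-1 : ℝ) 1) ∧
              ∀ v h, (1 / (n : ℝ)) * ∑ i, E h i * X v i = B v h},
            (1 / (n : ℝ)) * ∑ i, genLoss lp lm (fun v => X.1 v i) (fun v => Xt.1 v i)) :=
        ⟨-((V:ℝ)*C), by rintro - ⟨Xt, rfl⟩; exact hsupLB Xt.1 Xt.2⟩
      have step1 : (⨅ Xt : {Xt : Fin V → Fin n → ℝ // ∀ v i, Xt v i ∈ Set.Icc (-1 : ℝ) 1},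
          ⨆ X : {X : Fin V → Fin n → ℝ //
              (∀ v i, X v i ∈ Set.Icc (-1 : ℝ) 1) ∧
              ∀ v h, (1 / (n : ℝ)) * ∑ i, E h i * X v i = B v h},
            (1 / (n : ℝ)) * ∑ i, genLoss lp lm (fun v => X.1 v i) (fun v => Xt.1 v i))
          ≤ ⨆ X : {X : Fin V → Fin n → ℝ //
              (∀ v i, X v i ∈ Set.Icc (-1 : ℝ) 1) ∧
              ∀ v h, (1 / (n : ℝ)) * ∑ i, E h i * X v i = B v h},
            (1 / (n : ℝ)) * ∑ i, genLoss lp lm (fun v => X.1 v i)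
              (fun v => sig (∑ h, wv v h * E h i)) :=
        ciInf_le hbb ⟨fun v i => sig (∑ h, wv v h * E h i), fun v i => hsig _⟩
      refine step1.trans ((upper_at wv).trans ?_)
      have hstep : ∑ v, (1/2) * (-(∑ h, B v h * wv v h)
            + (1 / (n : ℝ)) * ∑ i, PsiGen lp lm sig (∑ h, wv v h * E h i))
          ≤ ∑ v, (1/2) * (Dv v + 2*ε/(V:ℝ)) :=
        Finset.sum_le_sum fun v _ => by have := (hwvlt v).le; linarith
      refine hstep.trans (le_of_eq ?_)
      have hsplit : ∑ v, (1/2) * (Dv v + 2*ε/(V:ℝ))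
          = (1/2) * ∑ v, Dv v + (V:ℝ) * ((1/2)*(2*ε/(V:ℝ))) := by
        simp only [mul_add]
        rw [Finset.sum_add_distrib, ← Finset.mul_sum, Finset.sum_const, Finset.card_univ,
          Fintype.card_fin, nsmul_eq_mul]
      rw [hsplit]
      congr 1
      field_simp
    · exact le_ciInf fun Xt => lower_at Xt.1 Xt.2
  · intro wstar hws
    apply le_antisymm
    · refine (upper_at wstar).trans ?_
      rw [Finset.mul_sum]
      refine Finset.sum_le_sum fun v _ => ?_
      have h2 : -(∑ h, B v h * wstar v h)
          + (1 / (n : ℝ)) * ∑ i, PsiGen lp lm sig (∑ h, wstar v h * E h i) ≤ Dv v :=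
        le_ciInf (hws v)
      linarith
    · exact lower_at (fun v i => sig (∑ h, wstar v h * E h i)) (fun v i => hsig _)
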